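/- With W, T, and the vectors v_i (for i ∉ T) as in the Plücker-minor construction, for every i ∉ T one has W.mulVec v_i = 0, i.e. each v_i lies in the kernel of the ℤ-linear map ℤ^m → ℤ^n given by W. -/

import Mathlib

/-- The Plücker-minor vector `v_i` associated to the columns `S_i = T ∪ {i}` of `W`:
at a column `a = e_i(l) ∈ S_i` (where `e_i` is the increasing enumeration of `S_i`)
its value is `(-1)^(l+1)` times the maximal minor of `W` on the columns `S_i \ {a}`
(taken in increasing order); it vanishes outside `S_i`. -/
noncomputable def pluckerVec {n m : ℕ} (W : Matrix (Fin n) (Fin m) ℤ)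
    (T : Finset (Fin m)) (i : Fin m) (h : (insert i T).card = n + 1) : Fin m → ℤ :=
  fun a =>
    if ha : a ∈ insert i T then
      (-1) ^ ((((insert i T).orderIsoOfFin h).symm ⟨a, ha⟩ : Fin (n + 1)) + 1 : ℕ) *
        (W.submatrix id
          (fun r : Fin n =>
            (((insert i T).orderIsoOfFin h)
              ((((insert i T).orderIsoOfFin h).symm ⟨a, ha⟩).succAbove r) : Fin m))).det
    else 0

/-- Each Plücker-minor vector `v_i` (for `i ∉ T`) lies in the kernel of `W`. -/
theorem pluckerVec_mem_ker {n m : ℕ} (hnm : n ≤ m) (W : Matrix (Fin n) (Fin m) ℤ)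
    (T : Finset (Fin m)) (hT : T.card = n)
    (hdet : (W.submatrix id (fun r : Fin n => ((T.orderIsoOfFin hT) r : Fin m))).det ≠ 0)
    (i : Fin m) (hi : i ∉ T) :
    W.mulVec (pluckerVec W T i (by rw [Finset.card_insert_of_notMem hi, hT])) = 0 := by
  have h : (insert i T).card = n + 1 := by rw [Finset.card_insert_of_notMem hi, hT]
  set S := insert i T
  set e := S.orderIsoOfFin h with he
  funext k
  -- the (n+1)×(n+1) matrix with row 0 = row k of W on columns e, rows succ j = row j
  set M : Matrix (Fin (n+1)) (Fin (n+1)) ℤ :=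
    fun r c => Fin.cases (W k (e c)) (fun j => W j (e c)) r with hM
  have hdup : M.det = 0 := by
    apply Matrix.det_zero_of_row_eq (i := 0) (j := k.succ) (Fin.succ_ne_zero k).symm
    funext c; simp [hM]
  have hexp := Matrix.det_succ_row_zero M
  rw [hdup] at hexp
  have hsub : ∀ l : Fin (n+1),
      (M.submatrix Fin.succ l.succAbove) = W.submatrix id (fun r => (e (l.succAbove r) : Fin m)) := by
    intro l; funext r c; simp [hM, Matrix.submatrix_apply]; rfl
  have key : ∑ l : Fin (n+1), (-1 : ℤ) ^ (l : ℕ) * W k (e l) *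
      (W.submatrix id (fun r => (e (l.succAbove r) : Fin m))).det = 0 := by
    rw [← hexp.symm] at *
    rw [hexp]
    apply Finset.sum_congr rfl
    intro l _
    rw [hsub l]
    simp [hM]
  show ∑ a : Fin m, W k a * pluckerVec W T i h a = 0
  have hzero : ∀ a ∉ S, W k a * pluckerVec W T i h a = 0 := by
    intro a ha; have ha' : a ∉ insert i T := ha; simp only [pluckerVec, dif_neg ha', mul_zero]
  rw [← Finset.sum_subset (Finset.subset_univ S) (fun a _ ha => hzero a ha)]
  rw [← Finset.sum_attach S (fun a => W k a * pluckerVec W T i h a)]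
  rw [show S.attach = (Finset.univ : Finset {x // x ∈ S}) from rfl, ← Equiv.sum_comp e.toEquiv]
  have hterm : ∀ l : Fin (n+1),
      W k (e l) * pluckerVec W T i h (e l) =
      -((-1 : ℤ) ^ (l : ℕ) * W k (e l) *
        (W.submatrix id (fun r => (e (l.succAbove r) : Fin m))).det) := by
    intro l
    have hmem : ((e l : Fin m)) ∈ insert i T := (e l).2
    have hsymm : e.symm ⟨e l, hmem⟩ = l := by
      simp
    simp only [pluckerVec, dif_pos hmem]
    rw [show (⟨(e l : Fin m), hmem⟩ : {x // x ∈ S}) = e l from rfl, hsymm]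
    ring_nf
    rfl
  calc ∑ l : Fin (n+1), W k (e.toEquiv l) * pluckerVec W T i h (e.toEquiv l)
      = -∑ l : Fin (n+1), (-1 : ℤ) ^ (l : ℕ) * W k (e l) *
        (W.submatrix id (fun r => (e (l.succAbove r) : Fin m))).det := by
        rw [← Finset.sum_neg_distrib]; exact Finset.sum_congr rfl fun l _ => hterm l
    _ = 0 := by rw [key, neg_zero]
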